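/- For every integer d ≥ 1 there exists c > 0 with the following property. Let P̃ : ℝ⁴ → ℝ be a polynomial of degree ≤ d in the variables (x₁,y₁,x₂,y₂). Set P₀(x₂,y₂) := P̃(0,0,x₂,y₂) and P* := P̃ − P₀, and write P*(x,y) = Σ_{(j,k)≠(0,0)} q_{jk}(x₂,y₂) x₁^j y₁^k with q_{jk} polynomials in (x₂,y₂). Then (Σ_{(j,k)≠(0,0)} ‖q_{jk}‖²)^{1/2} + ‖P₀‖_nd ≥ c ‖P̃‖_nd, where ‖q_{jk}‖ is the ℓ² coefficient norm of q_{jk}, ‖P₀‖_nd is the nondegeneracy norm of P₀ as a polynomial in (x₂,y₂) with respect to the maps (x₂,y₂) ↦ x₂, y₂, x₂+y₂, and ‖P̃‖_nd is the nondegeneracy norm of P̃ with respect to the maps (x₁,y₁,x₂,y₂) ↦ (x₁,x₂), (y₁,y₂), (x₁+y₁,x₂+y₂). -/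

import Mathlib

open MvPolynomial

/-- The ℓ² norm of the vector of coefficients of a polynomial. -/
noncomputable def coeffNorm {σ : Type*} (p : MvPolynomial σ ℝ) : ℝ :=
  Real.sqrt (∑ α ∈ p.support, (p.coeff α) ^ 2)


lemma coeffNorm_nonneg {σ : Type*} (p : MvPolynomial σ ℝ) : 0 ≤ coeffNorm p :=
  Real.sqrt_nonneg _

lemma coeffNorm_eq_on {σ : Type*} (p : MvPolynomial σ ℝ) (S : Finset (σ →₀ ℕ))
    (h : p.support ⊆ S) :
    coeffNorm p = Real.sqrt (∑ α ∈ S, (p.coeff α) ^ 2) := by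
  unfold coeffNorm
  congr 1
  refine Finset.sum_subset h fun x _ hx => ?_
  rw [MvPolynomial.notMem_support_iff.mp hx]; ring

lemma coeffNorm_add_le {σ : Type*} (p q : MvPolynomial σ ℝ) :
    coeffNorm (p + q) ≤ coeffNorm p + coeffNorm q := by
  classical
  set S : Finset (σ →₀ ℕ) := (p + q).support ∪ p.support ∪ q.support with hS
  have h0 : (p + q).support ⊆ S := by intro x hx; simp [hS, hx]
  have h1 : p.support ⊆ S := by intro x hx; simp [hS, hx]
  have h2 : q.support ⊆ S := by intro x hx; simp [hS, hx]
  let u : EuclideanSpace ℝ S := WithLp.toLp 2 (fun a => p.coeff a)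
  let v : EuclideanSpace ℝ S := WithLp.toLp 2 (fun a => q.coeff a)
  have hu : coeffNorm p = ‖u‖ := by
    rw [coeffNorm_eq_on p S h1, EuclideanSpace.norm_eq,
      ← Finset.sum_coe_sort S (fun α => (p.coeff α) ^ 2)]
    congr 1; apply Finset.sum_congr rfl; intro a _
    simp [u, Real.norm_eq_abs, sq_abs]
  have hv : coeffNorm q = ‖v‖ := by
    rw [coeffNorm_eq_on q S h2, EuclideanSpace.norm_eq,
      ← Finset.sum_coe_sort S (fun α => (q.coeff α) ^ 2)]
    congr 1; apply Finset.sum_congr rfl; intro a _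
    simp [v, Real.norm_eq_abs, sq_abs]
  have huv : coeffNorm (p + q) = ‖u + v‖ := by
    rw [coeffNorm_eq_on (p + q) S h0, EuclideanSpace.norm_eq,
      ← Finset.sum_coe_sort S (fun α => ((p + q).coeff α) ^ 2)]
    congr 1; apply Finset.sum_congr rfl; intro a _
    simp [u, v, Real.norm_eq_abs, sq_abs, MvPolynomial.coeff_add]
  rw [hu, hv, huv]
  exact norm_add_le u v

lemma coeffNorm_rename {σ τ : Type*} {g : σ → τ} (hg : Function.Injective g)
    (p : MvPolynomial σ ℝ) : coeffNorm (rename g p) = coeffNorm p := by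
  classical
  unfold coeffNorm
  congr 1
  rw [MvPolynomial.support_rename_of_injective hg, Finset.sum_image
    (fun a _ b _ h => Finsupp.mapDomain_injective hg h)]
  exact Finset.sum_congr rfl fun α _ => by
    rw [MvPolynomial.coeff_rename_mapDomain g hg]

lemma totalDegree_polyAeval_X_le {n : ℕ} (i : Fin n) (p : Polynomial ℝ) :
    (Polynomial.aeval (X i : MvPolynomial (Fin n) ℝ) p).totalDegree ≤ p.natDegree := by
  rw [Polynomial.aeval_eq_sum_range]
  refine (MvPolynomial.totalDegree_finset_sum _ _).trans (Finset.sup_le fun b hb => ?_)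
  have hb' : b ≤ p.natDegree := Finset.mem_range_succ_iff.mp hb
  calc (p.coeff b • (X i : MvPolynomial (Fin n) ℝ) ^ b).totalDegree
      ≤ ((X i : MvPolynomial (Fin n) ℝ) ^ b).totalDegree := by
        rw [MvPolynomial.smul_eq_C_mul]
        exact (MvPolynomial.totalDegree_mul _ _).trans (by simp)
    _ ≤ b := by simp [MvPolynomial.totalDegree_X_pow]
    _ ≤ p.natDegree := hb'

/-- Nondegeneracy norm of a two-variable polynomial `p(s,t)` relative to the maps
`(s,t) ↦ s, t, s+t`. -/
noncomputable def ndNorm2 (d : ℕ) (p : MvPolynomial (Fin 2) ℝ) : ℝ :=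
  sInf { r : ℝ | ∃ p₁ p₂ p₃ : Polynomial ℝ,
    p₁.natDegree ≤ d ∧ p₂.natDegree ≤ d ∧ p₃.natDegree ≤ d ∧
    r = coeffNorm (p - Polynomial.aeval (MvPolynomial.X 0) p₁
      - Polynomial.aeval (MvPolynomial.X 1) p₂
      - Polynomial.aeval (MvPolynomial.X 0 + MvPolynomial.X 1) p₃) }

/-- Nondegeneracy norm of a four-variable polynomial `P(x₁,y₁,x₂,y₂)` (variables indexed
`0 ↦ x₁`, `1 ↦ y₁`, `2 ↦ x₂`, `3 ↦ y₂`) relative to the three maps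
`(x₁,y₁,x₂,y₂) ↦ (x₁,x₂), (y₁,y₂), (x₁+y₁,x₂+y₂)`: the infimum of
`‖P − p₁(x₁,x₂) − p₂(y₁,y₂) − p₃(x₁+y₁,x₂+y₂)‖` over two-variable polynomials `p₁,p₂,p₃` of
degree `≤ d`. -/
noncomputable def ndNorm4 (d : ℕ) (P : MvPolynomial (Fin 4) ℝ) : ℝ :=
  sInf { r : ℝ | ∃ p₁ p₂ p₃ : MvPolynomial (Fin 2) ℝ,
    p₁.totalDegree ≤ d ∧ p₂.totalDegree ≤ d ∧ p₃.totalDegree ≤ d ∧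
    r = coeffNorm (P
      - MvPolynomial.aeval ![MvPolynomial.X 0, MvPolynomial.X 2] p₁
      - MvPolynomial.aeval ![MvPolynomial.X 1, MvPolynomial.X 3] p₂
      - MvPolynomial.aeval ![MvPolynomial.X 0 + MvPolynomial.X 1,
          MvPolynomial.X 2 + MvPolynomial.X 3] p₃) }

/-- the key lemma of Section 6: with `P₀(x₂,y₂) := P̃(0,0,x₂,y₂)` and
`P* := P̃ − P₀`, one has `‖P*‖ + ‖P₀‖_nd ≥ c‖P̃‖_nd`. Here `coeffNorm P*` is precisely
`(∑_{(j,k)≠(0,0)} ‖q_{jk}‖²)^{1/2}`, where `P* = ∑_{(j,k)≠(0,0)} q_{jk}(x₂,y₂)x₁ʲy₁ᵏ`,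
since the ℓ² norm of all the coefficients of `P*` splits over the groups `(j,k)`. -/
theorem stmt_9 (d : ℕ) (hd : 1 ≤ d) :
    ∃ c : ℝ, 0 < c ∧
      ∀ P : MvPolynomial (Fin 4) ℝ, P.totalDegree ≤ d →
        coeffNorm (P - MvPolynomial.aeval
            ![(0 : MvPolynomial (Fin 4) ℝ), 0, MvPolynomial.X 2, MvPolynomial.X 3] P)
          + ndNorm2 d (MvPolynomial.aeval
              ![(0 : MvPolynomial (Fin 2) ℝ), 0, MvPolynomial.X 0, MvPolynomial.X 1] P)
        ≥ c * ndNorm4 d P := by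
  refine ⟨1, one_pos, fun P hP => ?_⟩
  rw [ge_iff_le, one_mul]
  set P0lift : MvPolynomial (Fin 4) ℝ :=
    MvPolynomial.aeval ![(0 : MvPolynomial (Fin 4) ℝ), 0, MvPolynomial.X 2, MvPolynomial.X 3] P
    with hP0lift
  set P0 : MvPolynomial (Fin 2) ℝ :=
    MvPolynomial.aeval ![(0 : MvPolynomial (Fin 2) ℝ), 0, MvPolynomial.X 0, MvPolynomial.X 1] P
    with hP0
  set g : Fin 2 → Fin 4 := ![2, 3] with hg
  have hginj : Function.Injective g := by
    rw [hg]; decide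
  have hlift : P0lift = rename g P0 := by
    rw [hP0lift, hP0, ← AlgHom.comp_apply]
    congr 1
    apply MvPolynomial.algHom_ext
    intro i
    fin_cases i <;> simp [hg, Matrix.cons_val_zero, Matrix.cons_val_one]
  have key : ndNorm4 d P - coeffNorm (P - P0lift) ≤ ndNorm2 d P0 := by
    apply le_csInf
    · exact ⟨_, 0, 0, 0, by simp, by simp, by simp, rfl⟩
    · rintro r ⟨p₁, p₂, p₃, h1, h2, h3, rfl⟩
      rw [sub_le_iff_le_add]
      have hmem : coeffNorm (P
          - MvPolynomial.aeval ![MvPolynomial.X 0, MvPolynomial.X 2]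
              (Polynomial.aeval (MvPolynomial.X 1 : MvPolynomial (Fin 2) ℝ) p₁)
          - MvPolynomial.aeval ![MvPolynomial.X 1, MvPolynomial.X 3]
              (Polynomial.aeval (MvPolynomial.X 1 : MvPolynomial (Fin 2) ℝ) p₂)
          - MvPolynomial.aeval ![MvPolynomial.X 0 + MvPolynomial.X 1,
              MvPolynomial.X 2 + MvPolynomial.X 3]
              (Polynomial.aeval (MvPolynomial.X 1 : MvPolynomial (Fin 2) ℝ) p₃)) ∈
          { r : ℝ | ∃ p₁ p₂ p₃ : MvPolynomial (Fin 2) ℝ,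
            p₁.totalDegree ≤ d ∧ p₂.totalDegree ≤ d ∧ p₃.totalDegree ≤ d ∧
            r = coeffNorm (P
              - MvPolynomial.aeval ![MvPolynomial.X 0, MvPolynomial.X 2] p₁
              - MvPolynomial.aeval ![MvPolynomial.X 1, MvPolynomial.X 3] p₂
              - MvPolynomial.aeval ![MvPolynomial.X 0 + MvPolynomial.X 1,
                  MvPolynomial.X 2 + MvPolynomial.X 3] p₃) } := by
        exact ⟨_, _, _, (totalDegree_polyAeval_X_le _ _).trans h1,
          (totalDegree_polyAeval_X_le _ _).trans h2,
          (totalDegree_polyAeval_X_le _ _).trans h3, rfl⟩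
      have hbdd : BddBelow { r : ℝ | ∃ p₁ p₂ p₃ : MvPolynomial (Fin 2) ℝ,
            p₁.totalDegree ≤ d ∧ p₂.totalDegree ≤ d ∧ p₃.totalDegree ≤ d ∧
            r = coeffNorm (P
              - MvPolynomial.aeval ![MvPolynomial.X 0, MvPolynomial.X 2] p₁
              - MvPolynomial.aeval ![MvPolynomial.X 1, MvPolynomial.X 3] p₂
              - MvPolynomial.aeval ![MvPolynomial.X 0 + MvPolynomial.X 1,
                  MvPolynomial.X 2 + MvPolynomial.X 3] p₃) } := by
        refine ⟨0, ?_⟩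
        rintro r ⟨a, b, c, _, _, _, rfl⟩
        exact coeffNorm_nonneg _
      have step1 : ndNorm4 d P ≤ coeffNorm (P
          - MvPolynomial.aeval ![MvPolynomial.X 0, MvPolynomial.X 2]
              (Polynomial.aeval (MvPolynomial.X 1 : MvPolynomial (Fin 2) ℝ) p₁)
          - MvPolynomial.aeval ![MvPolynomial.X 1, MvPolynomial.X 3]
              (Polynomial.aeval (MvPolynomial.X 1 : MvPolynomial (Fin 2) ℝ) p₂)
          - MvPolynomial.aeval ![MvPolynomial.X 0 + MvPolynomial.X 1,
              MvPolynomial.X 2 + MvPolynomial.X 3]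
              (Polynomial.aeval (MvPolynomial.X 1 : MvPolynomial (Fin 2) ℝ) p₃)) :=
        csInf_le hbdd hmem
      -- identify the three substituted polynomials
      have e1 : MvPolynomial.aeval ![MvPolynomial.X 0, MvPolynomial.X 2]
          (Polynomial.aeval (MvPolynomial.X 1 : MvPolynomial (Fin 2) ℝ) p₁)
          = Polynomial.aeval (MvPolynomial.X 2 : MvPolynomial (Fin 4) ℝ) p₁ := by
        rw [← Polynomial.aeval_algHom_apply]
        simp
      have e2 : MvPolynomial.aeval ![MvPolynomial.X 1, MvPolynomial.X 3]
          (Polynomial.aeval (MvPolynomial.X 1 : MvPolynomial (Fin 2) ℝ) p₂)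
          = Polynomial.aeval (MvPolynomial.X 3 : MvPolynomial (Fin 4) ℝ) p₂ := by
        rw [← Polynomial.aeval_algHom_apply]
        simp
      have e3 : MvPolynomial.aeval ![MvPolynomial.X 0 + MvPolynomial.X 1,
              MvPolynomial.X 2 + MvPolynomial.X 3]
          (Polynomial.aeval (MvPolynomial.X 1 : MvPolynomial (Fin 2) ℝ) p₃)
          = Polynomial.aeval (MvPolynomial.X 2 + MvPolynomial.X 3 : MvPolynomial (Fin 4) ℝ) p₃ := by
        rw [← Polynomial.aeval_algHom_apply]
        simp
      have hren : P0lift - Polynomial.aeval (MvPolynomial.X 2 : MvPolynomial (Fin 4) ℝ) p₁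
          - Polynomial.aeval (MvPolynomial.X 3 : MvPolynomial (Fin 4) ℝ) p₂
          - Polynomial.aeval (MvPolynomial.X 2 + MvPolynomial.X 3 : MvPolynomial (Fin 4) ℝ) p₃
          = rename g (P0 - Polynomial.aeval (MvPolynomial.X 0) p₁
            - Polynomial.aeval (MvPolynomial.X 1) p₂
            - Polynomial.aeval (MvPolynomial.X 0 + MvPolynomial.X 1) p₃) := by
        rw [map_sub, map_sub, map_sub, hlift,
          ← Polynomial.aeval_algHom_apply, ← Polynomial.aeval_algHom_apply,
          ← Polynomial.aeval_algHom_apply]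
        simp [hg]
      calc ndNorm4 d P
          ≤ coeffNorm (P
            - Polynomial.aeval (MvPolynomial.X 2 : MvPolynomial (Fin 4) ℝ) p₁
            - Polynomial.aeval (MvPolynomial.X 3 : MvPolynomial (Fin 4) ℝ) p₂
            - Polynomial.aeval (MvPolynomial.X 2 + MvPolynomial.X 3 : MvPolynomial (Fin 4) ℝ) p₃)
            := by rw [← e1, ← e2, ← e3]; exact step1
        _ = coeffNorm ((P - P0lift) + (P0lift
            - Polynomial.aeval (MvPolynomial.X 2 : MvPolynomial (Fin 4) ℝ) p₁
            - Polynomial.aeval (MvPolynomial.X 3 : MvPolynomial (Fin 4) ℝ) p₂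
            - Polynomial.aeval (MvPolynomial.X 2 + MvPolynomial.X 3 : MvPolynomial (Fin 4) ℝ) p₃))
            := by ring_nf
        _ ≤ coeffNorm (P - P0lift) + coeffNorm (P0lift
            - Polynomial.aeval (MvPolynomial.X 2 : MvPolynomial (Fin 4) ℝ) p₁
            - Polynomial.aeval (MvPolynomial.X 3 : MvPolynomial (Fin 4) ℝ) p₂
            - Polynomial.aeval (MvPolynomial.X 2 + MvPolynomial.X 3 : MvPolynomial (Fin 4) ℝ) p₃)
            := coeffNorm_add_le _ _
        _ = coeffNorm (P0 - Polynomial.aeval (MvPolynomial.X 0) p₁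
            - Polynomial.aeval (MvPolynomial.X 1) p₂
            - Polynomial.aeval (MvPolynomial.X 0 + MvPolynomial.X 1) p₃)
            + coeffNorm (P - P0lift) := by
            rw [hren, coeffNorm_rename hginj]; ring
  unfold ndNorm2 at key ⊢
  linarith
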